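/- Let r > 0, ε ∈ (0, r/4], η ∈ (0, ε], and fix x̃ ∈ ℝ^{d−1} with |x̃| < r. Set S₃ = √((r+ε)² − |x̃|²) and S₄ = √((r+ε+η)² − |x̃|²). Then there exist absolute constants c₁, c₂ > 0 (independent of r, ε, η, x̃, d) such that c₁ · η r / S₃ ≤ S₄ − S₃ ≤ c₂ · η r / S₃. -/
import Mathlib


/-- There are absolute constants c₁, c₂ > 0 such that for all d, r, ε, η, xt
as in the hypotheses, with S₃ = √((r+ε)²−|xt|²), S₄ = √((r+ε+η)²−|xt|²), one has
c₁·ηr/S₃ ≤ S₄ − S₃ ≤ c₂·ηr/S₃. -/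
theorem stmt_4 :
    ∃ c₁ c₂ : ℝ, 0 < c₁ ∧ 0 < c₂ ∧
      ∀ (d : ℕ) (r ε η : ℝ), 0 < r → ε ∈ Set.Ioc 0 (r / 4) → η ∈ Set.Ioc 0 ε →
        ∀ xt : EuclideanSpace ℝ (Fin (d - 1)), ‖xt‖ < r →
          c₁ * (η * r / Real.sqrt ((r + ε) ^ 2 - ‖xt‖ ^ 2)) ≤
              Real.sqrt ((r + ε + η) ^ 2 - ‖xt‖ ^ 2) -
                Real.sqrt ((r + ε) ^ 2 - ‖xt‖ ^ 2) ∧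
            Real.sqrt ((r + ε + η) ^ 2 - ‖xt‖ ^ 2) -
                Real.sqrt ((r + ε) ^ 2 - ‖xt‖ ^ 2) ≤
              c₂ * (η * r / Real.sqrt ((r + ε) ^ 2 - ‖xt‖ ^ 2)) := by
  refine ⟨2/3, 11/4, by norm_num, by norm_num, ?_⟩
  intro d r ε η hr hε hη xt hxt
  obtain ⟨hε0, hε4⟩ := hε
  obtain ⟨hη0, hηε⟩ := hη
  set x := ‖xt‖ with hxdef
  have hx0 : 0 ≤ x := norm_nonneg _
  have hA : 0 < (r + ε) ^ 2 - x ^ 2 := by nlinarith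
  have hB : 0 < (r + ε + η) ^ 2 - x ^ 2 := by nlinarith
  set a := Real.sqrt ((r + ε) ^ 2 - x ^ 2) with hadef
  set b := Real.sqrt ((r + ε + η) ^ 2 - x ^ 2) with hbdef
  have ha : 0 < a := Real.sqrt_pos.2 hA
  have hb : 0 < b := Real.sqrt_pos.2 hB
  have ha2 : a ^ 2 = (r + ε) ^ 2 - x ^ 2 := Real.sq_sqrt hA.le
  have hb2 : b ^ 2 = (r + ε + η) ^ 2 - x ^ 2 := Real.sq_sqrt hB.le
  have hab : a ≤ b := Real.sqrt_le_sqrt (by nlinarith)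
  -- key: b ≤ 2a, since b² - a² = η(2(r+ε)+η) ≤ (11/4)rη ≤ (11/8)a²
  have hA2 : 2 * r * η ≤ a ^ 2 := by nlinarith
  have hb2a : b ≤ 2 * a := by nlinarith
  constructor
  · rw [show (2:ℝ)/3 * (η * r / a) = 2/3 * (η * r) / a by ring, div_le_iff₀ ha]
    nlinarith [mul_pos ha hb]
  · rw [show (11:ℝ)/4 * (η * r / a) = 11/4 * (η * r) / a by ring, le_div_iff₀ ha]
    nlinarith [mul_pos ha hb]
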